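/- Let R be a commutative topological ring such that (i) the open two-sided ideals form a basis of neighbourhoods of 0, (ii) the natural map R → lim_{I open ideal} R/I is an isomorphism, and (iii) the Jacobson radical Jac(R) is open. Then the natural group homomorphism R^× → lim_{I open ideal} (R/I)^× is an isomorphism. -/

import Mathlib

/-- Let `R` be a commutative topological ring whose open ideals form a basis
of neighbourhoods of `0`, which is complete (`R ≅ lim R/I` over open ideals `I`), and whose
Jacobson radical is open. Then `R^× → lim (R/I)^×` is an isomorphism (injective and
surjective onto compatible families of units). -/
theorem stmt12 (R : Type*) [CommRing R] [TopologicalSpace R] [IsTopologicalRing R]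
    (hbasis : ∀ s ∈ nhds (0 : R), ∃ I : Ideal R, IsOpen (I : Set R) ∧ (I : Set R) ⊆ s)
    (hinj : ∀ r : R,
      (∀ I : Ideal R, IsOpen (I : Set R) → Ideal.Quotient.mk I r = 0) → r = 0)
    (hsurj : ∀ x : ∀ I : {I : Ideal R // IsOpen (I : Set R)}, R ⧸ I.1,
      (∀ (I J : {I : Ideal R // IsOpen (I : Set R)}) (h : I.1 ≤ J.1),
        Ideal.Quotient.factor (S := I.1) (T := J.1) h (x I) = x J) →
      ∃ r : R, ∀ I : {I : Ideal R // IsOpen (I : Set R)}, Ideal.Quotient.mk I.1 r = x I)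
    (hjac : IsOpen ((Ideal.jacobson (⊥ : Ideal R) : Ideal R) : Set R)) :
    (∀ u v : Rˣ,
      (∀ I : Ideal R, IsOpen (I : Set R) →
        Units.map (Ideal.Quotient.mk I).toMonoidHom u =
          Units.map (Ideal.Quotient.mk I).toMonoidHom v) → u = v) ∧
    ∀ x : ∀ I : {I : Ideal R // IsOpen (I : Set R)}, (R ⧸ I.1)ˣ,
      (∀ (I J : {I : Ideal R // IsOpen (I : Set R)}) (h : I.1 ≤ J.1),
        Units.map (Ideal.Quotient.factor (S := I.1) (T := J.1) h).toMonoidHom (x I) = x J) →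
      ∃ u : Rˣ, ∀ I : {I : Ideal R // IsOpen (I : Set R)},
        Units.map (Ideal.Quotient.mk I.1).toMonoidHom u = x I := by
  constructor
  · intro u v h
    ext
    have : (u : R) - v = 0 := by
      apply hinj
      intro I hI
      simpa [sub_eq_zero] using congrArg Units.val (h I hI)
    exact sub_eq_zero.mp this
  · intro x hx
    obtain ⟨r, hr⟩ := hsurj (fun I => ((x I : (R ⧸ I.1)ˣ) : R ⧸ I.1)) (by
      intro I J h
      have := congrArg Units.val (hx I J h)
      simpa using this)
    obtain ⟨s, hs⟩ := hsurj (fun I => (((x I)⁻¹ : (R ⧸ I.1)ˣ) : R ⧸ I.1)) (by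
      intro I J h
      have := congrArg Units.val (congrArg (·⁻¹) (hx I J h))
      simpa using this)
    have hrs : r * s = 1 := by
      have : r * s - 1 = 0 := by
        apply hinj
        intro I hI
        have h1 := hr ⟨I, hI⟩
        have h2 := hs ⟨I, hI⟩
        simp only [map_sub, map_mul, map_one, h1, h2]
        rw [Units.mul_inv]
        ring
      have := sub_eq_zero.mp this
      linear_combination this
    refine ⟨⟨r, s, hrs, by rw [mul_comm]; exact hrs⟩, fun I => ?_⟩
    ext
    simpa using hr I
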